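/- Let H be a finite-dimensional Hilbert space, N_A a self-adjoint operator on H, and {M_i} a finite family of operators with ∑ M_i† M_i = 1 and [N_A, M_i] = 0 for all i. Then for any unit vector φ, ∑_i ⟨φ|M_i† N_A² M_i|φ⟩ = ⟨φ|N_A²|φ⟩, and ∑_i ⟨φ|M_i† N_A M_i|φ⟩²/⟨φ|M_i† M_i|φ⟩ ≥ ⟨φ|N_A|φ⟩², where terms with ⟨φ|M_i† M_i|φ⟩ = 0 are omitted. Consequently the average variance ∑_i [⟨φ|M_i† N_A² M_i|φ⟩ − ⟨φ|M_i† N_A M_i|φ⟩²/⟨φ|M_i† M_i|φ⟩] is at most ⟨φ|N_A²|φ⟩ − ⟨φ|N_A|φ⟩². -/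

import Mathlib

open Matrix

/-- Expectation value `⟨φ|A|φ⟩` (real part) of an operator on `ℂ^d`. -/
noncomputable def expVal {d : ℕ} (A : Matrix (Fin d) (Fin d) ℂ) (φ : Fin d → ℂ) : ℝ :=
  (star φ ⬝ᵥ (A *ᵥ φ)).re

lemma expVal_sum {d k : ℕ} (A : Fin k → Matrix (Fin d) (Fin d) ℂ) (φ : Fin d → ℂ) :
    ∑ i, expVal (A i) φ = expVal (∑ i, A i) φ := by
  have h1 : (∑ i, A i) *ᵥ φ = ∑ i, A i *ᵥ φ :=
    map_sum (Matrix.mulVec.addMonoidHomLeft φ) A Finset.univ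
  have h2 : star φ ⬝ᵥ (∑ i, A i *ᵥ φ) = ∑ i, star φ ⬝ᵥ (A i *ᵥ φ) := by
    simp [dotProduct, Finset.mul_sum, Finset.sum_apply]
    exact Finset.sum_comm
  simp [expVal, h1, h2, Complex.re_sum]

lemma expVal_conj {d : ℕ} (A B : Matrix (Fin d) (Fin d) ℂ) (φ : Fin d → ℂ) :
    expVal (Bᴴ * A * B) φ = (star (B *ᵥ φ) ⬝ᵥ (A *ᵥ (B *ᵥ φ))).re := by
  simp only [expVal, ← Matrix.mulVec_mulVec, Matrix.star_mulVec]
  rw [Matrix.dotProduct_mulVec (star φ) Bᴴ]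

lemma re_dot_self_nonneg {d : ℕ} (v : Fin d → ℂ) : 0 ≤ (star v ⬝ᵥ v).re := by
  simp only [dotProduct, Pi.star_apply, Complex.re_sum]
  refine Finset.sum_nonneg fun j _ => ?_
  simpa [Complex.normSq_apply] using Complex.normSq_nonneg (v j)

lemma re_dot_self_eq_zero {d : ℕ} (v : Fin d → ℂ) (h : (star v ⬝ᵥ v).re = 0) : v = 0 := by
  have h' : ∑ j, Complex.normSq (v j) = 0 := by
    rw [← h]; simp [dotProduct, Complex.re_sum, Complex.normSq_apply,
      Complex.mul_re]
  have := (Finset.sum_eq_zero_iff_of_nonneg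
    (fun j _ => Complex.normSq_nonneg (v j))).mp h'
  funext j
  exact Complex.normSq_eq_zero.mp (this j (Finset.mem_univ j))

/-- SiV is an entanglement monotone: for Kraus operators `M i` with
`∑ Mᵢ† Mᵢ = 1` commuting with the self-adjoint `N_A`, and a unit vector `φ`,
the first moment identity, the Cauchy–Schwarz bound for the second term, and
the resulting bound on the average variance all hold. -/
theorem siv_monotone {d k : ℕ} (NA : Matrix (Fin d) (Fin d) ℂ)
    (hNA : NA.IsHermitian) (M : Fin k → Matrix (Fin d) (Fin d) ℂ)
    (hsum : ∑ i, (M i)ᴴ * M i = 1)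
    (hcomm : ∀ i, NA * M i = M i * NA)
    (φ : Fin d → ℂ) (hφ : star φ ⬝ᵥ φ = 1) :
    (∑ i, expVal ((M i)ᴴ * (NA * NA) * M i) φ = expVal (NA * NA) φ) ∧
    (∑ i, (if expVal ((M i)ᴴ * M i) φ = 0 then 0 else
        (expVal ((M i)ᴴ * NA * M i) φ) ^ 2 / expVal ((M i)ᴴ * M i) φ)
      ≥ (expVal NA φ) ^ 2) ∧
    (∑ i, (expVal ((M i)ᴴ * (NA * NA) * M i) φ -
        (if expVal ((M i)ᴴ * M i) φ = 0 then 0 else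
          (expVal ((M i)ᴴ * NA * M i) φ) ^ 2 / expVal ((M i)ᴴ * M i) φ))
      ≤ expVal (NA * NA) φ - (expVal NA φ) ^ 2) := by
  have hcomm' : ∀ i, (M i)ᴴ * NA = NA * (M i)ᴴ := by
    intro i
    have := congrArg conjTranspose (hcomm i)
    simpa [Matrix.conjTranspose_mul, hNA.eq] using this
  -- Part 1
  have hid2 : ∑ i, (M i)ᴴ * (NA * NA) * M i = NA * NA := by
    have h1 : ∀ i, (M i)ᴴ * (NA * NA) * M i = NA * ((M i)ᴴ * M i) * NA := by
      intro i
      calc (M i)ᴴ * (NA * NA) * M i = ((M i)ᴴ * NA) * (NA * M i) := by noncomm_ring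
        _ = (NA * (M i)ᴴ) * (M i * NA) := by rw [hcomm' i, hcomm i]
        _ = NA * ((M i)ᴴ * M i) * NA := by noncomm_ring
    simp only [h1, ← Finset.sum_mul, ← Finset.mul_sum, hsum, mul_one]
  have part1 : ∑ i, expVal ((M i)ᴴ * (NA * NA) * M i) φ = expVal (NA * NA) φ := by
    rw [expVal_sum, hid2]
  -- Part 2 setup
  set e : Fin k → ℝ := fun i => expVal ((M i)ᴴ * NA * M i) φ with he_def
  set p : Fin k → ℝ := fun i => expVal ((M i)ᴴ * M i) φ with hp_def
  have hid1 : ∑ i, (M i)ᴴ * NA * M i = NA := by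
    have h1 : ∀ i, (M i)ᴴ * NA * M i = ((M i)ᴴ * M i) * NA := by
      intro i
      rw [mul_assoc, hcomm i, ← mul_assoc]
    simp only [h1, ← Finset.sum_mul, hsum, one_mul]
  have he : ∑ i, e i = expVal NA φ := by rw [he_def, expVal_sum, hid1]
  have hp1 : ∑ i, p i = 1 := by
    rw [hp_def]
    have : ∀ i, (M i)ᴴ * M i = (M i)ᴴ * 1 * M i := by simp
    simp only [this]
    rw [expVal_sum]
    simp only [← this, hsum]
    simp [expVal, hφ]
  have hp0 : ∀ i, 0 ≤ p i := by
    intro i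
    have : p i = (star (M i *ᵥ φ) ⬝ᵥ ((1 : Matrix (Fin d) (Fin d) ℂ) *ᵥ (M i *ᵥ φ))).re := by
      rw [hp_def]; simpa using expVal_conj 1 (M i) φ
    rw [this, Matrix.one_mulVec]
    exact re_dot_self_nonneg _
  have hpe : ∀ i, p i = 0 → e i = 0 := by
    intro i hpi
    have hw : M i *ᵥ φ = 0 := by
      apply re_dot_self_eq_zero
      have : p i = (star (M i *ᵥ φ) ⬝ᵥ ((1 : Matrix (Fin d) (Fin d) ℂ) *ᵥ (M i *ᵥ φ))).re := by
        rw [hp_def]; simpa using expVal_conj 1 (M i) φ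
      rw [this, Matrix.one_mulVec] at hpi
      exact hpi
    rw [he_def]
    simp only [expVal_conj NA (M i) φ, hw]
    simp [expVal]
  -- the filtered sum
  classical
  set s : Finset (Fin k) := Finset.univ.filter (fun i => p i ≠ 0) with hs_def
  have hsum_eq : (∑ i, (if p i = 0 then 0 else (e i) ^ 2 / p i))
      = ∑ i ∈ s, (e i) ^ 2 / p i := by
    rw [hs_def, Finset.sum_filter]
    congr 1; funext i
    by_cases h : p i = 0 <;> simp [h]
  have hes : ∑ i ∈ s, e i = expVal NA φ := by
    rw [← he]
    apply Finset.sum_subset (Finset.filter_subset _ _)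
    intro i _ hi
    have : p i = 0 := by
      by_contra h
      exact hi (Finset.mem_filter.mpr ⟨Finset.mem_univ i, h⟩)
    exact hpe i this
  have hps : ∑ i ∈ s, p i ≤ 1 := by
    rw [← hp1]
    exact Finset.sum_le_sum_of_subset_of_nonneg (Finset.filter_subset _ _)
      (fun i _ _ => hp0 i)
  have hppos : ∀ i ∈ s, 0 < p i := by
    intro i hi
    exact lt_of_le_of_ne (hp0 i) (Ne.symm (Finset.mem_filter.mp hi).2)
  have part2 : (∑ i, (if p i = 0 then 0 else (e i) ^ 2 / p i)) ≥ (expVal NA φ) ^ 2 := by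
    rw [hsum_eq]
    have hCS := Finset.sq_sum_div_le_sum_sq_div s e hppos
    rw [hes] at hCS
    refine le_trans ?_ hCS
    rcases eq_or_lt_of_le (Finset.sum_nonneg (fun i hi => (hppos i hi).le)) with h0 | h0
    · -- sum of p over s = 0 means s is empty, so expVal NA φ = 0
      have hse : s = ∅ := by
        by_contra hne
        obtain ⟨i, hi⟩ := Finset.nonempty_iff_ne_empty.mpr hne
        have hlt := Finset.sum_lt_sum_of_nonempty ⟨i, hi⟩ (fun j hj => hppos j hj)
        simp only [Finset.sum_const_zero] at hlt
        linarith
      have hE : expVal NA φ = 0 := by rw [← hes, hse]; simp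
      simp [hE, hse]
    · rw [le_div_iff₀ h0]
      exact mul_le_of_le_one_right (sq_nonneg _) hps
  refine ⟨part1, part2, ?_⟩
  rw [Finset.sum_sub_distrib, part1]
  exact sub_le_sub_left part2 _
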